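/- arXiv:2507.15005 — 2 statements merged into one kernel-verified Lean document; each statement's English description precedes it below -/
import Mathlib

section
/- Let n ≥ 3 and let f, g be units of ℤ[t^{±1}]. Then there exists a group homomorphism ĥ : WT_n → GL_n(ℤ[t^{±1}]) such that for every 1 ≤ i ≤ n−1, ĥ(s_i) = R_i(f) and ĥ(ρ_i) = R_i(g), where R_i(u) denotes the n×n matrix agreeing with the identity except in rows and columns i, i+1, where it has the 2×2 block [[0, u],[u^{-1}, 0]]. -/
noncomputable section
open Matrix

/-- The defining relations of the virtual twin group `VTₙ` on generators
`s_0, …, s_{n-2}` (the `Sum.inl` generators, 0-indexed) and `ρ_0, …, ρ_{n-2}`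
(the `Sum.inr` generators, 0-indexed). -/
def vtRels (n : ℕ) : Set (FreeGroup (Fin (n - 1) ⊕ Fin (n - 1))) :=
  {r | (∃ i : Fin (n - 1),
          r = FreeGroup.of (Sum.inl i) * FreeGroup.of (Sum.inl i)) ∨
       (∃ i j : Fin (n - 1), (i.val + 2 ≤ j.val ∨ j.val + 2 ≤ i.val) ∧
          r = FreeGroup.of (Sum.inl i) * FreeGroup.of (Sum.inl j) *
              (FreeGroup.of (Sum.inl i))⁻¹ * (FreeGroup.of (Sum.inl j))⁻¹) ∨
       (∃ i j : Fin (n - 1), j.val = i.val + 1 ∧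
          r = FreeGroup.of (Sum.inr i) * FreeGroup.of (Sum.inr j) * FreeGroup.of (Sum.inr i) *
              (FreeGroup.of (Sum.inr j) * FreeGroup.of (Sum.inr i) * FreeGroup.of (Sum.inr j))⁻¹) ∨
       (∃ i j : Fin (n - 1), (i.val + 2 ≤ j.val ∨ j.val + 2 ≤ i.val) ∧
          r = FreeGroup.of (Sum.inr i) * FreeGroup.of (Sum.inr j) *
              (FreeGroup.of (Sum.inr i))⁻¹ * (FreeGroup.of (Sum.inr j))⁻¹) ∨
       (∃ i : Fin (n - 1),
          r = FreeGroup.of (Sum.inr i) * FreeGroup.of (Sum.inr i)) ∨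
       (∃ i j : Fin (n - 1), (i.val + 2 ≤ j.val ∨ j.val + 2 ≤ i.val) ∧
          r = FreeGroup.of (Sum.inl i) * FreeGroup.of (Sum.inr j) *
              (FreeGroup.of (Sum.inl i))⁻¹ * (FreeGroup.of (Sum.inr j))⁻¹) ∨
       (∃ i j : Fin (n - 1), j.val = i.val + 1 ∧
          r = FreeGroup.of (Sum.inr i) * FreeGroup.of (Sum.inr j) * FreeGroup.of (Sum.inl i) *
              (FreeGroup.of (Sum.inl j) * FreeGroup.of (Sum.inr i) * FreeGroup.of (Sum.inr j))⁻¹)}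

/-- The defining relations of the welded twin group `WTₙ`: those of `VTₙ` together with
`ρᵢ s_{i+1} sᵢ = s_{i+1} sᵢ ρ_{i+1}`. -/
def wtRels (n : ℕ) : Set (FreeGroup (Fin (n - 1) ⊕ Fin (n - 1))) :=
  vtRels n ∪
  {r | ∃ i j : Fin (n - 1), j.val = i.val + 1 ∧
        r = FreeGroup.of (Sum.inr i) * FreeGroup.of (Sum.inl j) * FreeGroup.of (Sum.inl i) *
            (FreeGroup.of (Sum.inl j) * FreeGroup.of (Sum.inl i) * FreeGroup.of (Sum.inr j))⁻¹}

/-- The `n × n` matrix over `ℤ[t^{±1}]` agreeing with the identity except in rows and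
columns `i, i+1` (0-indexed), where it has the `2 × 2` block `[[0, u], [u⁻¹, 0]]`,
for a unit `u` of `ℤ[t^{±1}]`. -/
def Rmat (n i : ℕ) (u : (LaurentPolynomial ℤ)ˣ) : Matrix (Fin n) (Fin n) (LaurentPolynomial ℤ) :=
  Matrix.of fun j k =>
    if j.val = i ∧ k.val = i then 0
    else if j.val = i ∧ k.val = i + 1 then (u : LaurentPolynomial ℤ)
    else if j.val = i + 1 ∧ k.val = i then ((u⁻¹ : (LaurentPolynomial ℤ)ˣ) : LaurentPolynomial ℤ)
    else if j.val = i + 1 ∧ k.val = i + 1 then 0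
    else if j = k then 1 else 0


abbrev LP := LaurentPolynomial ℤ

variable {n : ℕ}

def Pm (σ : Equiv.Perm (Fin n)) : Matrix (Fin n) (Fin n) LP :=
  Matrix.of fun j k => if j = σ k then 1 else 0

lemma Pm_mul (σ τ : Equiv.Perm (Fin n)) : Pm σ * Pm τ = Pm (σ * τ) := by
  ext j k : 1
  rw [Matrix.mul_apply, Finset.sum_eq_single (τ k)]
  · simp [Pm, Equiv.Perm.mul_apply]; exact if_congr Iff.rfl rfl rfl
  · intro b _ hb; simp [Pm, hb]
  · simp

lemma Pm_one : Pm (1 : Equiv.Perm (Fin n)) = 1 := by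
  ext j k : 1; simp [Pm, Matrix.one_apply, eq_comm]; exact if_congr Iff.rfl rfl rfl

lemma diag_mul_Pm (d : Fin n → LP) (σ : Equiv.Perm (Fin n)) :
    Matrix.diagonal d * Pm σ = Pm σ * Matrix.diagonal (fun k => d (σ k)) := by
  ext j k
  rw [Matrix.diagonal_mul, Matrix.mul_diagonal]
  by_cases h : j = σ k <;> simp [Pm, h]

lemma PD_mul (σ τ : Equiv.Perm (Fin n)) (d e : Fin n → LP) :
    (Pm σ * Matrix.diagonal d) * (Pm τ * Matrix.diagonal e) =
      Pm (σ * τ) * Matrix.diagonal (fun k => d (τ k) * e k) := by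
  rw [mul_assoc, ← mul_assoc (Matrix.diagonal d), diag_mul_Pm, mul_assoc,
    Matrix.diagonal_mul_diagonal, ← mul_assoc, Pm_mul]

lemma swap_commute {α : Type*} [DecidableEq α] {a b c d : α}
    (hac : a ≠ c) (had : a ≠ d) (hbc : b ≠ c) (hbd : b ≠ d) :
    Equiv.swap a b * Equiv.swap c d = Equiv.swap c d * Equiv.swap a b := by
  ext x
  simp only [Equiv.Perm.mul_apply, Equiv.swap_apply_def]
  split_ifs <;> simp_all

lemma swap_braid {α : Type*} [DecidableEq α] {a b c : α}
    (hab : a ≠ b) (hac : a ≠ c) (hbc : b ≠ c) :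
    Equiv.swap a b * Equiv.swap b c * Equiv.swap a b =
      Equiv.swap b c * Equiv.swap a b * Equiv.swap b c := by
  calc Equiv.swap a b * Equiv.swap b c * Equiv.swap a b
      = Equiv.swap b a * Equiv.swap c b * Equiv.swap b a := by
        rw [Equiv.swap_comm a b, Equiv.swap_comm b c]
    _ = Equiv.swap a c := Equiv.swap_mul_swap_mul_swap hbc.symm (Ne.symm hac)
    _ = Equiv.swap c a := Equiv.swap_comm _ _
    _ = Equiv.swap b c * Equiv.swap a b * Equiv.swap b c :=
        (Equiv.swap_mul_swap_mul_swap hab hac).symm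

def av (i : Fin (n - 1)) : Fin n := ⟨i.val, by have := i.isLt; omega⟩
def bv (i : Fin (n - 1)) : Fin n := ⟨i.val + 1, by have := i.isLt; omega⟩
def sw (i : Fin (n - 1)) : Equiv.Perm (Fin n) := Equiv.swap (av i) (bv i)
def dl (u : LPˣ) (i : Fin (n - 1)) : Fin n → LP := fun k =>
  if k = av i then ((u⁻¹ : LPˣ) : LP) else if k = bv i then (u : LP) else 1

lemma av_val (i : Fin (n - 1)) : (av i : Fin n).val = i.val := rfl
lemma bv_val (i : Fin (n - 1)) : (bv i : Fin n).val = i.val + 1 := rfl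

lemma sw_mul_self (i : Fin (n - 1)) : sw i * sw i = 1 := Equiv.swap_mul_self _ _
lemma sw_av (i : Fin (n - 1)) : sw i (av i) = bv i := Equiv.swap_apply_left _ _
lemma sw_bv (i : Fin (n - 1)) : sw i (bv i) = av i := Equiv.swap_apply_right _ _
lemma sw_other {i : Fin (n - 1)} {k : Fin n} (h1 : k.val ≠ i.val) (h2 : k.val ≠ i.val + 1) :
    sw i k = k :=
  Equiv.swap_apply_of_ne_of_ne (by simp [av, Fin.ext_iff]; omega) (by simp [bv, Fin.ext_iff]; omega)

lemma dl_av (u : LPˣ) (i : Fin (n - 1)) : dl u i (av i) = ((u⁻¹ : LPˣ) : LP) := by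
  simp [dl]

lemma dl_bv (u : LPˣ) (i : Fin (n - 1)) : dl u i (bv i) = (u : LP) := by
  have : (bv i : Fin n) ≠ av i := by simp [av, bv, Fin.ext_iff]
  simp [dl, this]

lemma dl_other (u : LPˣ) {i : Fin (n - 1)} {k : Fin n}
    (h1 : k.val ≠ i.val) (h2 : k.val ≠ i.val + 1) : dl u i k = 1 := by
  have ha : k ≠ av i := by simp [av, Fin.ext_iff]; omega
  have hb : k ≠ bv i := by simp [bv, Fin.ext_iff]; omega
  simp [dl, ha, hb]

lemma Rmat_eq (i : Fin (n - 1)) (u : LPˣ) :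
    Rmat n i.val u = Pm (sw i) * Matrix.diagonal (dl u i) := by
  ext j k
  rw [Matrix.mul_diagonal]
  simp only [Rmat, Pm, Matrix.of_apply, sw, dl, av, bv, Equiv.swap_apply_def, Fin.ext_iff]
  split_ifs <;> simp_all [Fin.ext_iff]

lemma Rmat_sq (i : Fin (n - 1)) (u : LPˣ) : Rmat n i.val u * Rmat n i.val u = 1 := by
  rw [Rmat_eq, PD_mul, sw_mul_self, Pm_one, one_mul]
  have hd : (fun k => dl u i (sw i k) * dl u i k) = fun _ : Fin n => (1 : LP) := by
    funext k
    rcases eq_or_ne k (av i) with rfl | h1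
    · rw [sw_av, dl_bv, dl_av, Units.mul_inv]
    rcases eq_or_ne k (bv i) with rfl | h2
    · rw [sw_bv, dl_av, dl_bv, Units.inv_mul]
    have h1' : k.val ≠ i.val := by simpa [av, Fin.ext_iff] using h1
    have h2' : k.val ≠ i.val + 1 := by simpa [bv, Fin.ext_iff] using h2
    rw [sw_other h1' h2', dl_other u h1' h2', one_mul]
  rw [hd, Matrix.diagonal_one]

lemma Rmat_comm {i j : Fin (n - 1)} (hij : i.val + 2 ≤ j.val ∨ j.val + 2 ≤ i.val)
    (u v : LPˣ) : Rmat n i.val u * Rmat n j.val v = Rmat n j.val v * Rmat n i.val u := by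
  have hswij : sw i * sw j = sw j * sw i := by
    apply swap_commute <;> simp [av, bv, Fin.ext_iff] <;> omega
  rw [Rmat_eq, Rmat_eq, PD_mul, PD_mul, hswij]
  refine congrArg _ (congrArg Matrix.diagonal ?_)
  funext k
  have hsjA : sw j (av i) = av i := sw_other (by rw [av_val]; omega) (by rw [av_val]; omega)
  have hsjB : sw j (bv i) = bv i := sw_other (by rw [bv_val]; omega) (by rw [bv_val]; omega)
  have hsiA : sw i (av j) = av j := sw_other (by rw [av_val]; omega) (by rw [av_val]; omega)
  have hsiB : sw i (bv j) = bv j := sw_other (by rw [bv_val]; omega) (by rw [bv_val]; omega)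
  have hdjA : dl v j (av i) = 1 := dl_other v (by rw [av_val]; omega) (by rw [av_val]; omega)
  have hdjB : dl v j (bv i) = 1 := dl_other v (by rw [bv_val]; omega) (by rw [bv_val]; omega)
  have hdiA : dl u i (av j) = 1 := dl_other u (by rw [av_val]; omega) (by rw [av_val]; omega)
  have hdiB : dl u i (bv j) = 1 := dl_other u (by rw [bv_val]; omega) (by rw [bv_val]; omega)
  rcases eq_or_ne k (av i) with rfl | h1
  · simp [hsjA, sw_av, hdjA, hdjB, dl_av]
  rcases eq_or_ne k (bv i) with rfl | h2
  · simp [hsjB, sw_bv, hdjA, hdjB, dl_bv]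
  rcases eq_or_ne k (av j) with rfl | h3
  · simp [hsiA, sw_av, hdiA, hdiB, dl_av]
  rcases eq_or_ne k (bv j) with rfl | h4
  · simp [hsiB, sw_bv, hdiA, hdiB, dl_bv]
  have h1' : k.val ≠ i.val := by simpa [av, Fin.ext_iff] using h1
  have h2' : k.val ≠ i.val + 1 := by simpa [bv, Fin.ext_iff] using h2
  have h3' : k.val ≠ j.val := by simpa [av, Fin.ext_iff] using h3
  have h4' : k.val ≠ j.val + 1 := by simpa [bv, Fin.ext_iff] using h4
  simp [sw_other h1' h2', sw_other h3' h4', dl_other u h1' h2', dl_other v h3' h4']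

section braid
variable {i j : Fin (n - 1)} (hj : j.val = i.val + 1)
include hj

lemma hBA : (bv i : Fin n) = av j := by simp [av, bv, Fin.ext_iff, hj]

lemma sw_braid' : sw i * sw j * sw i = sw j * sw i * sw j := by
  rw [show (sw j : Equiv.Perm (Fin n)) = Equiv.swap (bv i) (bv j) by rw [sw, hBA hj]]
  exact swap_braid (by simp [av, bv, Fin.ext_iff])
    (by simp [av, bv, Fin.ext_iff]; omega) (by simp [av, bv, Fin.ext_iff, hj])

lemma swiC : sw i (bv j) = bv j := sw_other (by rw [bv_val]; omega) (by rw [bv_val]; omega)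
lemma swjA : sw j (av i) = av i := sw_other (by rw [av_val]; omega) (by rw [av_val]; omega)
lemma swjB : sw j (bv i) = bv j := by rw [hBA hj]; exact sw_av j
lemma swjC : sw j (bv j) = bv i := by rw [sw_bv j, hBA hj]
lemma dliC (w : LPˣ) : dl w i (bv j) = 1 :=
  dl_other w (by rw [bv_val]; omega) (by rw [bv_val]; omega)
lemma dljA (w : LPˣ) : dl w j (av i) = 1 :=
  dl_other w (by rw [av_val]; omega) (by rw [av_val]; omega)
lemma dljB (w : LPˣ) : dl w j (bv i) = ((w⁻¹ : LPˣ) : LP) := by rw [hBA hj, dl_av]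

lemma Rmat_br1 (u v : LPˣ) :
    Rmat n i.val u * Rmat n j.val u * Rmat n i.val v =
      Rmat n j.val v * Rmat n i.val u * Rmat n j.val u := by
  rw [Rmat_eq i u, Rmat_eq j u, Rmat_eq i v, Rmat_eq j v,
    PD_mul, PD_mul, PD_mul, PD_mul, sw_braid' hj]
  refine congrArg _ (congrArg Matrix.diagonal ?_)
  funext k
  rcases eq_or_ne k (av i) with rfl | h1
  · simp only [sw_av, swjB hj, swjA hj, dliC hj, dljB hj, dl_av, dljA hj]; ring
  rcases eq_or_ne k (bv i) with rfl | h2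
  · simp only [sw_bv, swjA hj, swjB hj, swiC hj, dl_av, dljA hj, dl_bv, dliC hj, dljB hj]; ring
  rcases eq_or_ne k (bv j) with rfl | h3
  · simp only [swiC hj, swjC hj, sw_bv, dl_bv, dljA hj, dliC hj]; ring
  have h1' : k.val ≠ i.val := by simpa [av, Fin.ext_iff] using h1
  have h2' : k.val ≠ i.val + 1 := by simpa [bv, Fin.ext_iff] using h2
  have h3' : k.val ≠ j.val + 1 := by simpa [bv, Fin.ext_iff] using h3
  have hswi : sw i k = k := sw_other h1' h2'
  have hswj : sw j k = k := sw_other (by omega) (by omega)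
  have hdi : ∀ w : LPˣ, dl w i k = 1 := fun w => dl_other w h1' h2'
  have hdj : ∀ w : LPˣ, dl w j k = 1 := fun w => dl_other w (by omega) (by omega)
  simp [hswi, hswj, hdi, hdj]

lemma Rmat_br2 (u v : LPˣ) :
    Rmat n i.val u * Rmat n j.val v * Rmat n i.val v =
      Rmat n j.val v * Rmat n i.val v * Rmat n j.val u := by
  rw [Rmat_eq i u, Rmat_eq j u, Rmat_eq i v, Rmat_eq j v,
    PD_mul, PD_mul, PD_mul, PD_mul, sw_braid' hj]
  refine congrArg _ (congrArg Matrix.diagonal ?_)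
  funext k
  rcases eq_or_ne k (av i) with rfl | h1
  · simp only [sw_av, swjB hj, swjA hj, dliC hj, dljB hj, dl_av, dljA hj]; ring
  rcases eq_or_ne k (bv i) with rfl | h2
  · simp only [sw_bv, swjA hj, swjB hj, swiC hj, dl_av, dljA hj, dl_bv, dliC hj, dljB hj]; ring
  rcases eq_or_ne k (bv j) with rfl | h3
  · simp only [swiC hj, swjC hj, sw_bv, dl_bv, dljA hj, dliC hj]; ring
  have h1' : k.val ≠ i.val := by simpa [av, Fin.ext_iff] using h1
  have h2' : k.val ≠ i.val + 1 := by simpa [bv, Fin.ext_iff] using h2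
  have h3' : k.val ≠ j.val + 1 := by simpa [bv, Fin.ext_iff] using h3
  have hswi : sw i k = k := sw_other h1' h2'
  have hswj : sw j k = k := sw_other (by omega) (by omega)
  have hdi : ∀ w : LPˣ, dl w i k = 1 := fun w => dl_other w h1' h2'
  have hdj : ∀ w : LPˣ, dl w j k = 1 := fun w => dl_other w (by omega) (by omega)
  simp [hswi, hswj, hdi, hdj]

end braid

variable {n : ℕ}

def RU (i : Fin (n - 1)) (u : LPˣ) : GL (Fin n) LP :=
  ⟨Rmat n i.val u, Rmat n i.val u, Rmat_sq i u, Rmat_sq i u⟩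

lemma RU_sq (i : Fin (n - 1)) (u : LPˣ) : (RU i u : GL (Fin n) LP) * RU i u = 1 :=
  Units.ext (Rmat_sq i u)

lemma RU_comm {i j : Fin (n - 1)} (hij : i.val + 2 ≤ j.val ∨ j.val + 2 ≤ i.val) (u v : LPˣ) :
    (RU i u : GL (Fin n) LP) * RU j v = RU j v * RU i u :=
  Units.ext (Rmat_comm hij u v)

lemma RU_br1 {i j : Fin (n - 1)} (hj : j.val = i.val + 1) (u v : LPˣ) :
    (RU i u : GL (Fin n) LP) * RU j u * RU i v = RU j v * RU i u * RU j u :=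
  Units.ext (Rmat_br1 hj u v)

lemma RU_br2 {i j : Fin (n - 1)} (hj : j.val = i.val + 1) (u v : LPˣ) :
    (RU i u : GL (Fin n) LP) * RU j v * RU i v = RU j v * RU i v * RU j u :=
  Units.ext (Rmat_br2 hj u v)


/-- For `n ≥ 3` and any units `f, g` of `ℤ[t^{±1}]`, there is a group
homomorphism `ĥ : WTₙ → GLₙ(ℤ[t^{±1}])` with `ĥ(sᵢ) = Rᵢ(f)` and `ĥ(ρᵢ) = Rᵢ(g)` for
every `i`, where `Rᵢ(u)` agrees with the identity except for the block
`[[0, u], [u⁻¹, 0]]` in rows and columns `i, i+1`. -/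
theorem statement15 (n : ℕ) (hn : 3 ≤ n) (f g : (LaurentPolynomial ℤ)ˣ) :
    ∃ h : PresentedGroup (wtRels n) →*
        Matrix.GeneralLinearGroup (Fin n) (LaurentPolynomial ℤ),
      ∀ i : Fin (n - 1),
        (h (PresentedGroup.of (Sum.inl i)) :
          Matrix (Fin n) (Fin n) (LaurentPolynomial ℤ)) = Rmat n i.val f ∧
        (h (PresentedGroup.of (Sum.inr i)) :
          Matrix (Fin n) (Fin n) (LaurentPolynomial ℤ)) = Rmat n i.val g := by
  set F : Fin (n - 1) ⊕ Fin (n - 1) → GL (Fin n) LP :=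
    Sum.elim (fun i => RU i f) (fun i => RU i g) with hF
  have hrel : ∀ r ∈ wtRels n, FreeGroup.lift F r = 1 := by
    intro r hr
    rcases hr with hr | ⟨i, j, hj, rfl⟩
    · rcases hr with ⟨i, rfl⟩ | ⟨i, j, hij, rfl⟩ | ⟨i, j, hj, rfl⟩ | ⟨i, j, hij, rfl⟩ |
        ⟨i, rfl⟩ | ⟨i, j, hij, rfl⟩ | ⟨i, j, hj, rfl⟩
      · simp only [_root_.map_mul, FreeGroup.lift_apply_of, hF, Sum.elim_inl]
        exact RU_sq i f
      · simp only [_root_.map_mul, _root_.map_inv, FreeGroup.lift_apply_of, hF, Sum.elim_inl]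
        rw [RU_comm hij f f]; group
      · simp only [_root_.map_mul, _root_.map_inv, FreeGroup.lift_apply_of, hF, Sum.elim_inr]
        rw [RU_br1 hj g g]; group
      · simp only [_root_.map_mul, _root_.map_inv, FreeGroup.lift_apply_of, hF, Sum.elim_inr]
        rw [RU_comm hij g g]; group
      · simp only [_root_.map_mul, FreeGroup.lift_apply_of, hF, Sum.elim_inr]
        exact RU_sq i g
      · simp only [_root_.map_mul, _root_.map_inv, FreeGroup.lift_apply_of, hF, Sum.elim_inl, Sum.elim_inr]
        rw [RU_comm hij f g]; group
      · simp only [_root_.map_mul, _root_.map_inv, FreeGroup.lift_apply_of, hF, Sum.elim_inl, Sum.elim_inr]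
        rw [RU_br1 hj g f]; group
    · simp only [_root_.map_mul, _root_.map_inv, FreeGroup.lift_apply_of, hF, Sum.elim_inl, Sum.elim_inr]
      rw [RU_br2 hj g f]; group
  refine ⟨PresentedGroup.toGroup hrel, fun i => ⟨?_, ?_⟩⟩ <;>
    rw [PresentedGroup.toGroup.of] <;> rfl
end
end

section
/- Let n ≥ 3, let f be a unit of ℤ[t^{±1}], and let ĥ : WT_n → GL_n(ℤ[t^{±1}]) be a group homomorphism such that ĥ(s_i) = R_i(f) for all 1 ≤ i ≤ n−1 and such that ĥ is 2-local, i.e. for each i, ĥ(ρ_i) agrees with the identity matrix except possibly in rows and columns i, i+1. Then there exists a unit g of ℤ[t^{±1}] such that for every 1 ≤ i ≤ n−1, ĥ(ρ_i) = R_i(g), where R_i(u) denotes the n×n matrix agreeing with the identity except in rows and columns i, i+1, where it has the 2×2 block [[0, u],[u^{-1}, 0]]. -/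
noncomputable section
open Matrix

section MulHelpers
variable {n : ℕ} {R : Type*} [CommRing R]

private theorem mul_rowSingle {A X : Matrix (Fin n) (Fin n) R} {p m : Fin n} {c : R}
    (hA : ∀ l, A p l = if l = m then c else 0) (q : Fin n) :
    (A * X) p q = c * X m q := by
  rw [Matrix.mul_apply, Finset.sum_eq_single m]
  · rw [hA m, if_pos rfl]
  · intro l _ hl; rw [hA l, if_neg hl, zero_mul]
  · intro hm; exact absurd (Finset.mem_univ m) hm

private theorem mul_colSingle {A X : Matrix (Fin n) (Fin n) R} {q m : Fin n} {c : R}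
    (hA : ∀ l, A l q = if l = m then c else 0) (p : Fin n) :
    (X * A) p q = X p m * c := by
  rw [Matrix.mul_apply, Finset.sum_eq_single m]
  · rw [hA m, if_pos rfl]
  · intro l _ hl; rw [hA l, if_neg hl, mul_zero]
  · intro hm; exact absurd (Finset.mem_univ m) hm

private theorem mul_rowPair {A X : Matrix (Fin n) (Fin n) R} {p m1 m2 : Fin n} {c1 c2 : R}
    (hne : m1 ≠ m2)
    (hA : ∀ l, A p l = if l = m1 then c1 else if l = m2 then c2 else 0) (q : Fin n) :
    (A * X) p q = c1 * X m1 q + c2 * X m2 q := by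
  rw [Matrix.mul_apply]
  have h1 : ∀ l ∈ Finset.univ, A p l * X l q =
      (if l = m1 then c1 * X m1 q else 0) + (if l = m2 then c2 * X m2 q else 0) := by
    intro l _
    rw [hA l]
    by_cases e1 : l = m1
    · subst e1; rw [if_pos rfl, if_pos rfl, if_neg hne, add_zero]
    · rw [if_neg e1, if_neg e1]
      by_cases e2 : l = m2
      · subst e2; rw [if_pos rfl, if_pos rfl, zero_add]
      · rw [if_neg e2, if_neg e2, zero_mul, add_zero]
  rw [Finset.sum_congr rfl h1, Finset.sum_add_distrib,
    Finset.sum_ite_eq' Finset.univ m1, Finset.sum_ite_eq' Finset.univ m2,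
    if_pos (Finset.mem_univ m1), if_pos (Finset.mem_univ m2)]

private theorem loc_row {M : Matrix (Fin n) (Fin n) R} {k : ℕ}
    (hM : ∀ j l : Fin n, ((j.val ≠ k ∧ j.val ≠ k + 1) ∨ (l.val ≠ k ∧ l.val ≠ k + 1)) →
      M j l = (1 : Matrix (Fin n) (Fin n) R) j l)
    {e0 e1 : Fin n} (he0 : e0.val = k) (he1 : e1.val = k + 1)
    {p : Fin n} (hp : p.val = k ∨ p.val = k + 1) (l : Fin n) :
    M p l = if l = e0 then M p e0 else if l = e1 then M p e1 else 0 := by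
  by_cases h1 : l = e0
  · rw [if_pos h1, h1]
  · rw [if_neg h1]
    by_cases h2 : l = e1
    · rw [if_pos h2, h2]
    · rw [if_neg h2]
      have hl0 : l.val ≠ k := fun hv => h1 (Fin.ext (hv.trans he0.symm))
      have hl1 : l.val ≠ k + 1 := fun hv => h2 (Fin.ext (hv.trans he1.symm))
      rw [hM p l (Or.inr ⟨hl0, hl1⟩), Matrix.one_apply_ne
        (fun he => by rcases hp with h | h; exacts [hl0 (he ▸ h), hl1 (he ▸ h)])]

private theorem loc_row_other {M : Matrix (Fin n) (Fin n) R} {k : ℕ}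
    (hM : ∀ j l : Fin n, ((j.val ≠ k ∧ j.val ≠ k + 1) ∨ (l.val ≠ k ∧ l.val ≠ k + 1)) →
      M j l = (1 : Matrix (Fin n) (Fin n) R) j l)
    {p : Fin n} (hp1 : p.val ≠ k) (hp2 : p.val ≠ k + 1) (l : Fin n) :
    M p l = if l = p then 1 else 0 := by
  rw [hM p l (Or.inl ⟨hp1, hp2⟩), Matrix.one_apply]
  by_cases h : p = l
  · rw [if_pos h, if_pos h.symm]
  · rw [if_neg h, if_neg (fun hl => h hl.symm)]

end MulHelpers

section RmatHelpers

private theorem Rmat_row_lo {n i : ℕ} (u : (LaurentPolynomial ℤ)ˣ) {e0 e1 : Fin n}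
    (h0 : e0.val = i) (h1 : e1.val = i + 1) (l : Fin n) :
    Rmat n i u e0 l = if l = e1 then (u : LaurentPolynomial ℤ) else 0 := by
  simp only [Rmat, Matrix.of_apply, Fin.ext_iff, Fin.val_mk]
  split_ifs <;> first | rfl | omega

private theorem Rmat_row_hi {n i : ℕ} (u : (LaurentPolynomial ℤ)ˣ) {e0 e1 : Fin n}
    (h0 : e0.val = i) (h1 : e1.val = i + 1) (l : Fin n) :
    Rmat n i u e1 l = if l = e0 then ((u⁻¹ : (LaurentPolynomial ℤ)ˣ) : LaurentPolynomial ℤ) else 0 := by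
  simp only [Rmat, Matrix.of_apply, Fin.ext_iff, Fin.val_mk]
  split_ifs <;> first | rfl | omega

private theorem Rmat_row_other {n i : ℕ} (u : (LaurentPolynomial ℤ)ˣ) {p : Fin n}
    (hp1 : p.val ≠ i) (hp2 : p.val ≠ i + 1) (l : Fin n) :
    Rmat n i u p l = if l = p then 1 else 0 := by
  simp only [Rmat, Matrix.of_apply, Fin.ext_iff, Fin.val_mk]
  split_ifs <;> first | rfl | omega

private theorem Rmat_col_lo {n i : ℕ} (u : (LaurentPolynomial ℤ)ˣ) {e0 e1 : Fin n}
    (h0 : e0.val = i) (h1 : e1.val = i + 1) (l : Fin n) :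
    Rmat n i u l e0 = if l = e1 then ((u⁻¹ : (LaurentPolynomial ℤ)ˣ) : LaurentPolynomial ℤ) else 0 := by
  simp only [Rmat, Matrix.of_apply, Fin.ext_iff, Fin.val_mk]
  split_ifs <;> first | rfl | omega

private theorem Rmat_col_hi {n i : ℕ} (u : (LaurentPolynomial ℤ)ˣ) {e0 e1 : Fin n}
    (h0 : e0.val = i) (h1 : e1.val = i + 1) (l : Fin n) :
    Rmat n i u l e1 = if l = e0 then (u : LaurentPolynomial ℤ) else 0 := by
  simp only [Rmat, Matrix.of_apply, Fin.ext_iff, Fin.val_mk]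
  split_ifs <;> first | rfl | omega

private theorem Rmat_col_other {n i : ℕ} (u : (LaurentPolynomial ℤ)ˣ) {q : Fin n}
    (hq1 : q.val ≠ i) (hq2 : q.val ≠ i + 1) (l : Fin n) :
    Rmat n i u l q = if l = q then 1 else 0 := by
  simp only [Rmat, Matrix.of_apply, Fin.ext_iff, Fin.val_mk]
  split_ifs <;> first | rfl | omega

private theorem Rmat_off {n i : ℕ} (u : (LaurentPolynomial ℤ)ˣ) {j k : Fin n}
    (hjk : (j.val ≠ i ∧ j.val ≠ i + 1) ∨ (k.val ≠ i ∧ k.val ≠ i + 1)) :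
    Rmat n i u j k = if j = k then 1 else 0 := by
  simp only [Rmat, Matrix.of_apply]
  rcases hjk with ⟨h1, h2⟩ | ⟨h1, h2⟩ <;> split_ifs <;> first | rfl | omega

end RmatHelpers

private theorem aux_main (n : ℕ) (hn : 3 ≤ n) (f : (LaurentPolynomial ℤ)ˣ)
    (M : Fin (n - 1) → Matrix (Fin n) (Fin n) (LaurentPolynomial ℤ))
    (hloc : ∀ i : Fin (n - 1), ∀ j k : Fin n,
      ((j.val ≠ i.val ∧ j.val ≠ i.val + 1) ∨ (k.val ≠ i.val ∧ k.val ≠ i.val + 1)) →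
      M i j k = (1 : Matrix (Fin n) (Fin n) (LaurentPolynomial ℤ)) j k)
    (hsq : ∀ i, M i * M i = 1)
    (key3 : ∀ i j : Fin (n - 1), j.val = i.val + 1 →
      M i * M j * Rmat n i.val f = Rmat n j.val f * M i * M j)
    (key4 : ∀ i j : Fin (n - 1), j.val = i.val + 1 →
      M i * Rmat n j.val f * Rmat n i.val f = Rmat n j.val f * Rmat n i.val f * M j) :
    ∃ g : (LaurentPolynomial ℤ)ˣ, ∀ i, M i = Rmat n i.val g := by
  have h0n : 0 < n := by omega
  have h1n : 1 < n := by omega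
  have h2n : 2 < n := by omega
  have h0m : 0 < n - 1 := by omega
  have h1m : 1 < n - 1 := by omega
  have fne : (f : LaurentPolynomial ℤ) ≠ 0 := Units.ne_zero f
  have fine : ((f⁻¹ : (LaurentPolynomial ℤ)ˣ) : LaurentPolynomial ℤ) ≠ 0 := Units.ne_zero f⁻¹
  -- Step 1: all the 2×2 blocks agree (chain along the welded relation `key4`).
  have chain : ∀ m : ℕ, ∀ hm : m < n - 1, ∀ e0 e1 : Fin n, e0.val = m → e1.val = m + 1 →
      M ⟨m, hm⟩ e0 e0 = M ⟨0, h0m⟩ ⟨0, h0n⟩ ⟨0, h0n⟩ ∧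
      M ⟨m, hm⟩ e0 e1 = M ⟨0, h0m⟩ ⟨0, h0n⟩ ⟨1, h1n⟩ ∧
      M ⟨m, hm⟩ e1 e0 = M ⟨0, h0m⟩ ⟨1, h1n⟩ ⟨0, h0n⟩ ∧
      M ⟨m, hm⟩ e1 e1 = M ⟨0, h0m⟩ ⟨1, h1n⟩ ⟨1, h1n⟩ := by
    intro m
    induction m with
    | zero =>
      intro hm e0 e1 he0 he1
      obtain rfl : e0 = ⟨0, h0n⟩ := Fin.ext he0
      obtain rfl : e1 = ⟨1, h1n⟩ := Fin.ext he1
      exact ⟨rfl, rfl, rfl, rfl⟩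
    | succ p ih =>
      intro hm e1 e2 he1 he2
      have hp : p < n - 1 := Nat.lt_of_succ_lt hm
      have hpn0 : p < n := by omega
      have hpn : p + 1 < n := by omega
      have hpn2 : p + 2 < n := by omega
      obtain rfl : e1 = ⟨p + 1, hpn⟩ := Fin.ext he1
      obtain rfl : e2 = ⟨p + 2, hpn2⟩ := Fin.ext he2
      obtain ⟨ha, hb, hc, hd⟩ := ih hp ⟨p, hpn0⟩ ⟨p + 1, hpn⟩ rfl rfl
      have K : M ⟨p, hp⟩ * Rmat n (p + 1) f * Rmat n p f
          = Rmat n (p + 1) f * (Rmat n p f * M ⟨p + 1, hm⟩) :=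
        (key4 ⟨p, hp⟩ ⟨p + 1, hm⟩ rfl).trans (Matrix.mul_assoc _ _ _)
      have hv0 : (⟨p, hpn0⟩ : Fin n).val = p := rfl
      have hv1 : (⟨p + 1, hpn⟩ : Fin n).val = p + 1 := rfl
      have hv2 : (⟨p + 2, hpn2⟩ : Fin n).val = p + 2 := rfl
      have Ea := congrFun (congrFun K ⟨p, hpn0⟩) ⟨p + 1, hpn⟩
      rw [mul_colSingle (Rmat_col_hi f hv0 hv1),
          mul_colSingle (Rmat_col_other (i := p + 1) (q := (⟨p, hpn0⟩ : Fin n)) f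
            (by rw [hv0]; omega) (by rw [hv0]; omega)),
          mul_rowSingle (Rmat_row_other (i := p + 1) (p := (⟨p, hpn0⟩ : Fin n)) f
            (by rw [hv0]; omega) (by rw [hv0]; omega)),
          mul_rowSingle (Rmat_row_lo f hv0 hv1),
          mul_one, one_mul, ha] at Ea
      have Eb := congrFun (congrFun K ⟨p, hpn0⟩) ⟨p + 2, hpn2⟩
      rw [mul_colSingle (Rmat_col_other (i := p) (q := (⟨p + 2, hpn2⟩ : Fin n)) f
            (by rw [hv2]; omega) (by rw [hv2]; omega)),
          mul_colSingle (Rmat_col_hi f hv1 hv2),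
          mul_rowSingle (Rmat_row_other (i := p + 1) (p := (⟨p, hpn0⟩ : Fin n)) f
            (by rw [hv0]; omega) (by rw [hv0]; omega)),
          mul_rowSingle (Rmat_row_lo f hv0 hv1),
          mul_one, one_mul, hb] at Eb
      have Ec := congrFun (congrFun K ⟨p + 1, hpn⟩) ⟨p + 1, hpn⟩
      rw [mul_colSingle (Rmat_col_hi f hv0 hv1),
          mul_colSingle (Rmat_col_other (i := p + 1) (q := (⟨p, hpn0⟩ : Fin n)) f
            (by rw [hv0]; omega) (by rw [hv0]; omega)),
          mul_rowSingle (Rmat_row_lo f hv1 hv2),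
          mul_rowSingle (Rmat_row_other (i := p) (p := (⟨p + 2, hpn2⟩ : Fin n)) f
            (by rw [hv2]; omega) (by rw [hv2]; omega)),
          mul_one, one_mul, hc] at Ec
      have Ed := congrFun (congrFun K ⟨p + 1, hpn⟩) ⟨p + 2, hpn2⟩
      rw [mul_colSingle (Rmat_col_other (i := p) (q := (⟨p + 2, hpn2⟩ : Fin n)) f
            (by rw [hv2]; omega) (by rw [hv2]; omega)),
          mul_colSingle (Rmat_col_hi f hv1 hv2),
          mul_rowSingle (Rmat_row_lo f hv1 hv2),
          mul_rowSingle (Rmat_row_other (i := p) (p := (⟨p + 2, hpn2⟩ : Fin n)) f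
            (by rw [hv2]; omega) (by rw [hv2]; omega)),
          mul_one, one_mul, hd] at Ed
      exact ⟨mul_left_cancel₀ fne (Ea.symm.trans (mul_comm _ _)),
             mul_left_cancel₀ fne (Eb.symm.trans (mul_comm _ _)),
             mul_left_cancel₀ fne (Ec.symm.trans (mul_comm _ _)),
             mul_left_cancel₀ fne (Ed.symm.trans (mul_comm _ _))⟩
  -- Step 2: scalar equations at the corner.
  have hne01 : (⟨0, h0n⟩ : Fin n) ≠ ⟨1, h1n⟩ := Fin.ne_of_val_ne (by simp only [Fin.val_mk]; omega)
  have row0 : ∀ l, M ⟨0, h0m⟩ ⟨0, h0n⟩ l =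
      if l = ⟨0, h0n⟩ then M ⟨0, h0m⟩ ⟨0, h0n⟩ ⟨0, h0n⟩
      else if l = ⟨1, h1n⟩ then M ⟨0, h0m⟩ ⟨0, h0n⟩ ⟨1, h1n⟩ else 0 :=
    loc_row (hloc ⟨0, h0m⟩) rfl rfl (Or.inl rfl)
  have row1 : ∀ l, M ⟨0, h0m⟩ ⟨1, h1n⟩ l =
      if l = ⟨0, h0n⟩ then M ⟨0, h0m⟩ ⟨1, h1n⟩ ⟨0, h0n⟩
      else if l = ⟨1, h1n⟩ then M ⟨0, h0m⟩ ⟨1, h1n⟩ ⟨1, h1n⟩ else 0 :=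
    loc_row (hloc ⟨0, h0m⟩) rfl rfl (Or.inr rfl)
  have row2 : ∀ l, M ⟨0, h0m⟩ ⟨2, h2n⟩ l = if l = ⟨2, h2n⟩ then 1 else 0 :=
    loc_row_other (hloc ⟨0, h0m⟩) (by simp only [Fin.val_mk]; omega) (by simp only [Fin.val_mk]; omega)
  have E1 := congrFun (congrFun (hsq ⟨0, h0m⟩) ⟨0, h0n⟩) ⟨0, h0n⟩
  rw [mul_rowPair hne01 row0, Matrix.one_apply_eq] at E1
  have E2 := congrFun (congrFun (hsq ⟨0, h0m⟩) ⟨0, h0n⟩) ⟨1, h1n⟩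
  rw [mul_rowPair hne01 row0, Matrix.one_apply_ne hne01] at E2
  have E3 := congrFun (congrFun (hsq ⟨0, h0m⟩) ⟨1, h1n⟩) ⟨1, h1n⟩
  rw [mul_rowPair hne01 row1, Matrix.one_apply_eq] at E3
  -- entries of `M ⟨1, _⟩`
  obtain ⟨C1a, C1b, C1c, C1d⟩ := chain 1 h1m ⟨1, h1n⟩ ⟨2, h2n⟩ rfl rfl
  have z00 : M ⟨1, h1m⟩ ⟨0, h0n⟩ ⟨0, h0n⟩ = 1 := by
    rw [hloc ⟨1, h1m⟩ ⟨0, h0n⟩ ⟨0, h0n⟩ (Or.inl ⟨by simp only [Fin.val_mk]; omega, by simp only [Fin.val_mk]; omega⟩), Matrix.one_apply_eq]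
  have z01 : M ⟨1, h1m⟩ ⟨0, h0n⟩ ⟨1, h1n⟩ = 0 := by
    rw [hloc ⟨1, h1m⟩ ⟨0, h0n⟩ ⟨1, h1n⟩ (Or.inl ⟨by simp only [Fin.val_mk]; omega, by simp only [Fin.val_mk]; omega⟩),
      Matrix.one_apply_ne hne01]
  have z10 : M ⟨1, h1m⟩ ⟨1, h1n⟩ ⟨0, h0n⟩ = 0 := by
    rw [hloc ⟨1, h1m⟩ ⟨1, h1n⟩ ⟨0, h0n⟩ (Or.inr ⟨by simp only [Fin.val_mk]; omega, by simp only [Fin.val_mk]; omega⟩),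
      Matrix.one_apply_ne (Fin.ne_of_val_ne (by simp only [Fin.val_mk]; omega))]
  have z20 : M ⟨1, h1m⟩ ⟨2, h2n⟩ ⟨0, h0n⟩ = 0 := by
    rw [hloc ⟨1, h1m⟩ ⟨2, h2n⟩ ⟨0, h0n⟩ (Or.inr ⟨by simp only [Fin.val_mk]; omega, by simp only [Fin.val_mk]; omega⟩),
      Matrix.one_apply_ne (Fin.ne_of_val_ne (by simp only [Fin.val_mk]; omega))]
  have P00 := mul_rowPair (X := M ⟨1, h1m⟩) hne01 row0 ⟨0, h0n⟩
  rw [z00, z10] at P00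
  have P01 := mul_rowPair (X := M ⟨1, h1m⟩) hne01 row0 ⟨1, h1n⟩
  rw [z01, C1a] at P01
  have P11 := mul_rowPair (X := M ⟨1, h1m⟩) hne01 row1 ⟨1, h1n⟩
  rw [z01, C1a] at P11
  have P20 := mul_rowSingle (X := M ⟨1, h1m⟩) row2 ⟨0, h0n⟩
  rw [z20] at P20
  have K3 : M ⟨0, h0m⟩ * M ⟨1, h1m⟩ * Rmat n 0 f
      = Rmat n 1 f * (M ⟨0, h0m⟩ * M ⟨1, h1m⟩) :=
    (key3 ⟨0, h0m⟩ ⟨1, h1m⟩ rfl).trans (Matrix.mul_assoc _ _ _)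
  have E5 := congrFun (congrFun K3 ⟨1, h1n⟩) ⟨0, h0n⟩
  rw [mul_colSingle (Rmat_col_lo (i := 0) (e0 := (⟨0, h0n⟩ : Fin n)) (e1 := (⟨1, h1n⟩ : Fin n)) f rfl rfl), P11,
      mul_rowSingle (Rmat_row_lo (i := 1) (e0 := (⟨1, h1n⟩ : Fin n)) (e1 := (⟨2, h2n⟩ : Fin n)) f rfl rfl), P20] at E5
  have E6 := congrFun (congrFun K3 ⟨0, h0n⟩) ⟨1, h1n⟩
  rw [mul_colSingle (Rmat_col_hi (i := 0) (e0 := (⟨0, h0n⟩ : Fin n)) (e1 := (⟨1, h1n⟩ : Fin n)) f rfl rfl), P00,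
      mul_rowSingle (Rmat_row_other (i := 1) (p := (⟨0, h0n⟩ : Fin n)) f
        (by simp only [Fin.val_mk]; omega) (by simp only [Fin.val_mk]; omega)), P01] at E6
  simp only [mul_zero, zero_add, one_mul, add_zero, mul_one, zero_mul] at E5 E6
  -- E5 : d * a * f⁻¹ = 0 ; E6 : a * f = b * a
  have E5' : M ⟨0, h0m⟩ ⟨1, h1n⟩ ⟨1, h1n⟩ * M ⟨0, h0m⟩ ⟨0, h0n⟩ ⟨0, h0n⟩ = 0 := by
    rcases mul_eq_zero.mp E5 with hz | hz
    · exact hz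
    · exact absurd hz fine
  -- Step 3: the algebra.
  obtain ⟨ha0, hd0, hbc⟩ :
      M ⟨0, h0m⟩ ⟨0, h0n⟩ ⟨0, h0n⟩ = 0 ∧ M ⟨0, h0m⟩ ⟨1, h1n⟩ ⟨1, h1n⟩ = 0 ∧
      M ⟨0, h0m⟩ ⟨0, h0n⟩ ⟨1, h1n⟩ * M ⟨0, h0m⟩ ⟨1, h1n⟩ ⟨0, h0n⟩ = 1 := by
    by_cases ha : M ⟨0, h0m⟩ ⟨0, h0n⟩ ⟨0, h0n⟩ = 0
    · have hbc : M ⟨0, h0m⟩ ⟨0, h0n⟩ ⟨1, h1n⟩ * M ⟨0, h0m⟩ ⟨1, h1n⟩ ⟨0, h0n⟩ = 1 := by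
        rw [ha] at E1; simpa using E1
      have hbne : M ⟨0, h0m⟩ ⟨0, h0n⟩ ⟨1, h1n⟩ ≠ 0 := left_ne_zero_of_mul_eq_one hbc
      have hbd : M ⟨0, h0m⟩ ⟨0, h0n⟩ ⟨1, h1n⟩ * M ⟨0, h0m⟩ ⟨1, h1n⟩ ⟨1, h1n⟩ = 0 := by
        rw [ha] at E2; simpa using E2
      rcases mul_eq_zero.mp hbd with hz | hz
      · exact absurd hz hbne
      · exact ⟨ha, hz, hbc⟩
    · exfalso
      have hd : M ⟨0, h0m⟩ ⟨1, h1n⟩ ⟨1, h1n⟩ = 0 := by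
        rcases mul_eq_zero.mp E5' with hz | hz
        · exact hz
        · exact absurd hz ha
      have hbf : (f : LaurentPolynomial ℤ) = M ⟨0, h0m⟩ ⟨0, h0n⟩ ⟨1, h1n⟩ := by
        have hz : M ⟨0, h0m⟩ ⟨0, h0n⟩ ⟨0, h0n⟩ *
            ((f : LaurentPolynomial ℤ) - M ⟨0, h0m⟩ ⟨0, h0n⟩ ⟨1, h1n⟩) = 0 := by
          rw [mul_sub, E6]; ring
        rcases mul_eq_zero.mp hz with hz | hz
        · exact absurd hz ha
        · exact sub_eq_zero.mp hz
      have hcb : M ⟨0, h0m⟩ ⟨1, h1n⟩ ⟨0, h0n⟩ * M ⟨0, h0m⟩ ⟨0, h0n⟩ ⟨1, h1n⟩ = 1 := by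
        rw [hd] at E3; simpa using E3
      have haa : M ⟨0, h0m⟩ ⟨0, h0n⟩ ⟨0, h0n⟩ * M ⟨0, h0m⟩ ⟨0, h0n⟩ ⟨0, h0n⟩ = 0 := by
        have hbc' : M ⟨0, h0m⟩ ⟨0, h0n⟩ ⟨1, h1n⟩ * M ⟨0, h0m⟩ ⟨1, h1n⟩ ⟨0, h0n⟩ = 1 :=
          (mul_comm _ _).trans hcb
        rw [hbc'] at E1
        exact add_eq_right.mp E1
      exact ha (mul_self_eq_zero.mp haa)
  have hcb : M ⟨0, h0m⟩ ⟨1, h1n⟩ ⟨0, h0n⟩ * M ⟨0, h0m⟩ ⟨0, h0n⟩ ⟨1, h1n⟩ = 1 :=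
    (mul_comm _ _).trans hbc
  refine ⟨⟨M ⟨0, h0m⟩ ⟨0, h0n⟩ ⟨1, h1n⟩, M ⟨0, h0m⟩ ⟨1, h1n⟩ ⟨0, h0n⟩, hbc, hcb⟩, ?_⟩
  intro i
  have hin : i.val < n := by omega
  have hin1 : i.val + 1 < n := by omega
  have hiv : (⟨i.val, hin⟩ : Fin n).val = i.val := rfl
  have hiv1 : (⟨i.val + 1, hin1⟩ : Fin n).val = i.val + 1 := rfl
  obtain ⟨Ca, Cb, Cc, Cd⟩ :
      M i ⟨i.val, hin⟩ ⟨i.val, hin⟩ = M ⟨0, h0m⟩ ⟨0, h0n⟩ ⟨0, h0n⟩ ∧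
      M i ⟨i.val, hin⟩ ⟨i.val + 1, hin1⟩ = M ⟨0, h0m⟩ ⟨0, h0n⟩ ⟨1, h1n⟩ ∧
      M i ⟨i.val + 1, hin1⟩ ⟨i.val, hin⟩ = M ⟨0, h0m⟩ ⟨1, h1n⟩ ⟨0, h0n⟩ ∧
      M i ⟨i.val + 1, hin1⟩ ⟨i.val + 1, hin1⟩ = M ⟨0, h0m⟩ ⟨1, h1n⟩ ⟨1, h1n⟩ :=
    chain i.val i.isLt ⟨i.val, hin⟩ ⟨i.val + 1, hin1⟩ rfl rfl
  refine Matrix.ext fun j l => ?_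
  by_cases hj0 : j.val = i.val
  · obtain rfl : j = ⟨i.val, hin⟩ := Fin.ext hj0
    by_cases hl0 : l.val = i.val
    · obtain rfl : l = ⟨i.val, hin⟩ := Fin.ext hl0
      rw [Ca, ha0, Rmat_row_lo _ hiv hiv1,
        if_neg (Fin.ne_of_val_ne (by omega))]
    · by_cases hl1 : l.val = i.val + 1
      · obtain rfl : l = ⟨i.val + 1, hin1⟩ := Fin.ext hl1
        rw [Cb, Rmat_row_lo _ hiv hiv1, if_pos rfl]
      · rw [hloc i _ l (Or.inr ⟨hl0, hl1⟩), Matrix.one_apply,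
          Rmat_off _ (Or.inr ⟨hl0, hl1⟩)]
  · by_cases hj1 : j.val = i.val + 1
    · obtain rfl : j = ⟨i.val + 1, hin1⟩ := Fin.ext hj1
      by_cases hl0 : l.val = i.val
      · obtain rfl : l = ⟨i.val, hin⟩ := Fin.ext hl0
        rw [Cc, Rmat_row_hi _ hiv hiv1, if_pos rfl]
        rfl
      · by_cases hl1 : l.val = i.val + 1
        · obtain rfl : l = ⟨i.val + 1, hin1⟩ := Fin.ext hl1
          rw [Cd, hd0, Rmat_row_hi _ hiv hiv1,
            if_neg (Fin.ne_of_val_ne (by omega))]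
        · rw [hloc i _ l (Or.inr ⟨hl0, hl1⟩), Matrix.one_apply,
            Rmat_off _ (Or.inr ⟨hl0, hl1⟩)]
    · rw [hloc i j l (Or.inl ⟨hj0, hj1⟩), Matrix.one_apply,
        Rmat_off _ (Or.inl ⟨hj0, hj1⟩)]

/-- Let `n ≥ 3`, let `f` be a unit of `ℤ[t^{±1}]`, and let
`ĥ : WTₙ → GLₙ(ℤ[t^{±1}])` be a group homomorphism with `ĥ(sᵢ) = Rᵢ(f)` for all `i`
which is 2-local, i.e. each `ĥ(ρᵢ)` agrees with the identity matrix except possibly in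
rows and columns `i, i+1`. Then there is a unit `g` of `ℤ[t^{±1}]` such that
`ĥ(ρᵢ) = Rᵢ(g)` for every `i`. -/
theorem statement16 (n : ℕ) (hn : 3 ≤ n) (f : (LaurentPolynomial ℤ)ˣ)
    (h : PresentedGroup (wtRels n) →*
      Matrix.GeneralLinearGroup (Fin n) (LaurentPolynomial ℤ))
    (hs : ∀ i : Fin (n - 1),
      (h (PresentedGroup.of (Sum.inl i)) :
        Matrix (Fin n) (Fin n) (LaurentPolynomial ℤ)) = Rmat n i.val f)
    (hloc : ∀ i : Fin (n - 1), ∀ j k : Fin n,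
      ((j.val ≠ i.val ∧ j.val ≠ i.val + 1) ∨ (k.val ≠ i.val ∧ k.val ≠ i.val + 1)) →
      (h (PresentedGroup.of (Sum.inr i)) :
          Matrix (Fin n) (Fin n) (LaurentPolynomial ℤ)) j k =
        (1 : Matrix (Fin n) (Fin n) (LaurentPolynomial ℤ)) j k) :
    ∃ g : (LaurentPolynomial ℤ)ˣ, ∀ i : Fin (n - 1),
      (h (PresentedGroup.of (Sum.inr i)) :
        Matrix (Fin n) (Fin n) (LaurentPolynomial ℤ)) = Rmat n i.val g := by
  have hofmk : ∀ x : Fin (n - 1) ⊕ Fin (n - 1),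
      PresentedGroup.mk (wtRels n) (FreeGroup.of x) = PresentedGroup.of x := fun _ => rfl
  have hπ : ∀ r ∈ wtRels n, h (PresentedGroup.mk (wtRels n) r) = 1 := by
    intro r hr
    have h1 : PresentedGroup.mk (wtRels n) r = 1 :=
      (QuotientGroup.eq_one_iff r).mpr (Subgroup.subset_normalClosure hr)
    rw [h1, _root_.map_one]
  have hsq : ∀ i : Fin (n - 1),
      (h (PresentedGroup.of (Sum.inr i)) : Matrix (Fin n) (Fin n) (LaurentPolynomial ℤ)) *
        (h (PresentedGroup.of (Sum.inr i)) : Matrix (Fin n) (Fin n) (LaurentPolynomial ℤ)) = 1 := by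
    intro i
    have hr : FreeGroup.of (Sum.inr i) * FreeGroup.of (Sum.inr i) ∈ wtRels n :=
      Set.mem_union_left _ (Or.inr (Or.inr (Or.inr (Or.inr (Or.inl ⟨i, rfl⟩)))))
    have h2 := hπ _ hr
    simp only [_root_.map_mul, hofmk] at h2
    have h3 := congrArg (fun u : Matrix.GeneralLinearGroup (Fin n) (LaurentPolynomial ℤ) =>
      (u : Matrix (Fin n) (Fin n) (LaurentPolynomial ℤ))) h2
    simpa only [Units.val_mul, Units.val_one] using h3
  have key3 : ∀ i j : Fin (n - 1), j.val = i.val + 1 →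
      (h (PresentedGroup.of (Sum.inr i)) : Matrix (Fin n) (Fin n) (LaurentPolynomial ℤ)) *
        (h (PresentedGroup.of (Sum.inr j)) : Matrix (Fin n) (Fin n) (LaurentPolynomial ℤ)) *
        Rmat n i.val f =
      Rmat n j.val f *
        (h (PresentedGroup.of (Sum.inr i)) : Matrix (Fin n) (Fin n) (LaurentPolynomial ℤ)) *
        (h (PresentedGroup.of (Sum.inr j)) : Matrix (Fin n) (Fin n) (LaurentPolynomial ℤ)) := by
    intro i j hij
    have hr : FreeGroup.of (Sum.inr i) * FreeGroup.of (Sum.inr j) * FreeGroup.of (Sum.inl i) *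
        (FreeGroup.of (Sum.inl j) * FreeGroup.of (Sum.inr i) * FreeGroup.of (Sum.inr j))⁻¹
        ∈ wtRels n :=
      Set.mem_union_left _ (Or.inr (Or.inr (Or.inr (Or.inr (Or.inr (Or.inr ⟨i, j, hij, rfl⟩))))))
    have h2 := hπ _ hr
    simp only [_root_.map_mul, _root_.map_inv, hofmk] at h2
    rw [mul_inv_eq_one] at h2
    have h3 := congrArg (fun u : Matrix.GeneralLinearGroup (Fin n) (LaurentPolynomial ℤ) =>
      (u : Matrix (Fin n) (Fin n) (LaurentPolynomial ℤ))) h2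
    simp only [Units.val_mul] at h3
    rw [hs i, hs j] at h3
    exact h3
  have key4 : ∀ i j : Fin (n - 1), j.val = i.val + 1 →
      (h (PresentedGroup.of (Sum.inr i)) : Matrix (Fin n) (Fin n) (LaurentPolynomial ℤ)) *
        Rmat n j.val f * Rmat n i.val f =
      Rmat n j.val f * Rmat n i.val f *
        (h (PresentedGroup.of (Sum.inr j)) : Matrix (Fin n) (Fin n) (LaurentPolynomial ℤ)) := by
    intro i j hij
    have hr : FreeGroup.of (Sum.inr i) * FreeGroup.of (Sum.inl j) * FreeGroup.of (Sum.inl i) *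
        (FreeGroup.of (Sum.inl j) * FreeGroup.of (Sum.inl i) * FreeGroup.of (Sum.inr j))⁻¹
        ∈ wtRels n :=
      Set.mem_union_right _ ⟨i, j, hij, rfl⟩
    have h2 := hπ _ hr
    simp only [_root_.map_mul, _root_.map_inv, hofmk] at h2
    rw [mul_inv_eq_one] at h2
    have h3 := congrArg (fun u : Matrix.GeneralLinearGroup (Fin n) (LaurentPolynomial ℤ) =>
      (u : Matrix (Fin n) (Fin n) (LaurentPolynomial ℤ))) h2
    simp only [Units.val_mul] at h3
    rw [hs i, hs j] at h3
    exact h3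
  obtain ⟨g, hg⟩ := aux_main n hn f
    (fun i => (h (PresentedGroup.of (Sum.inr i)) : Matrix (Fin n) (Fin n) (LaurentPolynomial ℤ)))
    hloc hsq key3 key4
  exact ⟨g, hg⟩
end
end
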